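/- Every positive integer k with k ≡ 10702091 (mod 11184810) is a Riesel number. -/
import Mathlib

/-- A number is composite if it is a product of two integers greater than 1. -/
def IsComposite (n : ℕ) : Prop := ∃ a b : ℕ, 1 < a ∧ 1 < b ∧ n = a * b

/-- A Riesel number is an odd positive integer `k` such that `k·2^n − 1` is composite
for every positive integer `n`. -/
def IsRiesel (k : ℕ) : Prop := 0 < k ∧ Odd k ∧ ∀ n : ℕ, 0 < n → IsComposite (k * 2 ^ n - 1)

lemma composite_of_dvd {p m : ℕ} (hp : 1 < p) (hd : p ∣ m) (hm : p < m) : IsComposite m := by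
  obtain ⟨b, rfl⟩ := hd
  refine ⟨p, b, hp, ?_, rfl⟩
  rcases b with _ | _ | b <;> omega

lemma dvd_key (k n p s : ℕ) (hk0 : 0 < k) (hs : n % 24 = s) (hp : p ∣ 16777215)
    (hk : k ≡ 10702091 [MOD p]) (hval : 10702091 * 2 ^ s % p = 1 % p) :
    p ∣ k * 2 ^ n - 1 := by
  have h24 : (1 : ℕ) ≡ 2 ^ 24 [MOD p] :=
    (Nat.modEq_iff_dvd' (by norm_num)).mpr (by norm_num; exact hp)
  have hpow : (2 : ℕ) ^ n ≡ 2 ^ s [MOD p] := by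
    conv_lhs => rw [← Nat.div_add_mod n 24]
    rw [pow_add, pow_mul, hs]
    calc ((2:ℕ)^24)^(n/24) * 2^s ≡ 1^(n/24) * 2^s [MOD p] :=
          Nat.ModEq.mul ((h24.symm).pow _) rfl
      _ = 2^s := by rw [one_pow, one_mul]
  have hmul : k * 2 ^ n ≡ 1 [MOD p] := (hk.mul hpow).trans hval
  have h1 : (1 : ℕ) ≤ k * 2 ^ n := Nat.mul_pos hk0 (Nat.two_pow_pos n)
  exact (Nat.modEq_iff_dvd' h1).mp hmul.symm

lemma crux (k n : ℕ) (hk : 10702091 ≤ k) (p : ℕ) (hp : 1 < p) (hple : p ≤ 241)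
    (hdvd : p ∣ k * 2 ^ n - 1) : IsComposite (k * 2 ^ n - 1) := by
  apply composite_of_dvd hp hdvd
  have h2 : 1 ≤ 2 ^ n := Nat.one_le_two_pow
  have : k ≤ k * 2 ^ n := Nat.le_mul_of_pos_right k (by omega)
  omega

/-- Every positive integer `k` with `k ≡ 10702091 (mod 11184810)` is a
Riesel number. -/
theorem stmt_7 (k : ℕ) (hk : 0 < k) (hmod : k ≡ 10702091 [MOD 11184810]) :
    IsRiesel k := by
  have hkge : 10702091 ≤ k := by
    have := hmod
    unfold Nat.ModEq at this
    rcases Nat.lt_or_ge k 11184810 with h | h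
    · rw [Nat.mod_eq_of_lt h, Nat.mod_eq_of_lt (by norm_num)] at this
      omega
    · omega
  have hk3 : k ≡ 10702091 [MOD 3] := hmod.of_dvd (by norm_num)
  have hk5 : k ≡ 10702091 [MOD 5] := hmod.of_dvd (by norm_num)
  have hk7 : k ≡ 10702091 [MOD 7] := hmod.of_dvd (by norm_num)
  have hk13 : k ≡ 10702091 [MOD 13] := hmod.of_dvd (by norm_num)
  have hk17 : k ≡ 10702091 [MOD 17] := hmod.of_dvd (by norm_num)
  have hk241 : k ≡ 10702091 [MOD 241] := hmod.of_dvd (by norm_num)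
  refine ⟨hk, ?_, ?_⟩
  · have h2 : k ≡ 10702091 [MOD 2] := hmod.of_dvd (by norm_num)
    unfold Nat.ModEq at h2
    exact Nat.odd_iff.mpr (by omega)
  · intro n hn
    have hs : n % 24 < 24 := Nat.mod_lt _ (by norm_num)
    set s := n % 24 with hsdef
    interval_cases s
    · exact crux k n hkge 5 (by norm_num) (by norm_num)
        (dvd_key k n 5 _ hk hsdef.symm (by norm_num) hk5 (by norm_num))
    · exact crux k n hkge 3 (by norm_num) (by norm_num)
        (dvd_key k n 3 _ hk hsdef.symm (by norm_num) hk3 (by norm_num))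
    · exact crux k n hkge 13 (by norm_num) (by norm_num)
        (dvd_key k n 13 _ hk hsdef.symm (by norm_num) hk13 (by norm_num))
    · exact crux k n hkge 3 (by norm_num) (by norm_num)
        (dvd_key k n 3 _ hk hsdef.symm (by norm_num) hk3 (by norm_num))
    · exact crux k n hkge 5 (by norm_num) (by norm_num)
        (dvd_key k n 5 _ hk hsdef.symm (by norm_num) hk5 (by norm_num))
    · exact crux k n hkge 3 (by norm_num) (by norm_num)
        (dvd_key k n 3 _ hk hsdef.symm (by norm_num) hk3 (by norm_num))
    · exact crux k n hkge 7 (by norm_num) (by norm_num)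
        (dvd_key k n 7 _ hk hsdef.symm (by norm_num) hk7 (by norm_num))
    · exact crux k n hkge 3 (by norm_num) (by norm_num)
        (dvd_key k n 3 _ hk hsdef.symm (by norm_num) hk3 (by norm_num))
    · exact crux k n hkge 5 (by norm_num) (by norm_num)
        (dvd_key k n 5 _ hk hsdef.symm (by norm_num) hk5 (by norm_num))
    · exact crux k n hkge 3 (by norm_num) (by norm_num)
        (dvd_key k n 3 _ hk hsdef.symm (by norm_num) hk3 (by norm_num))
    · exact crux k n hkge 17 (by norm_num) (by norm_num)
        (dvd_key k n 17 _ hk hsdef.symm (by norm_num) hk17 (by norm_num))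
    · exact crux k n hkge 3 (by norm_num) (by norm_num)
        (dvd_key k n 3 _ hk hsdef.symm (by norm_num) hk3 (by norm_num))
    · exact crux k n hkge 5 (by norm_num) (by norm_num)
        (dvd_key k n 5 _ hk hsdef.symm (by norm_num) hk5 (by norm_num))
    · exact crux k n hkge 3 (by norm_num) (by norm_num)
        (dvd_key k n 3 _ hk hsdef.symm (by norm_num) hk3 (by norm_num))
    · exact crux k n hkge 13 (by norm_num) (by norm_num)
        (dvd_key k n 13 _ hk hsdef.symm (by norm_num) hk13 (by norm_num))
    · exact crux k n hkge 3 (by norm_num) (by norm_num)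
        (dvd_key k n 3 _ hk hsdef.symm (by norm_num) hk3 (by norm_num))
    · exact crux k n hkge 5 (by norm_num) (by norm_num)
        (dvd_key k n 5 _ hk hsdef.symm (by norm_num) hk5 (by norm_num))
    · exact crux k n hkge 3 (by norm_num) (by norm_num)
        (dvd_key k n 3 _ hk hsdef.symm (by norm_num) hk3 (by norm_num))
    · exact crux k n hkge 7 (by norm_num) (by norm_num)
        (dvd_key k n 7 _ hk hsdef.symm (by norm_num) hk7 (by norm_num))
    · exact crux k n hkge 3 (by norm_num) (by norm_num)
        (dvd_key k n 3 _ hk hsdef.symm (by norm_num) hk3 (by norm_num))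
    · exact crux k n hkge 5 (by norm_num) (by norm_num)
        (dvd_key k n 5 _ hk hsdef.symm (by norm_num) hk5 (by norm_num))
    · exact crux k n hkge 3 (by norm_num) (by norm_num)
        (dvd_key k n 3 _ hk hsdef.symm (by norm_num) hk3 (by norm_num))
    · exact crux k n hkge 241 (by norm_num) (by norm_num)
        (dvd_key k n 241 _ hk hsdef.symm (by norm_num) hk241 (by norm_num))
    · exact crux k n hkge 3 (by norm_num) (by norm_num)
        (dvd_key k n 3 _ hk hsdef.symm (by norm_num) hk3 (by norm_num))
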